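/- Let G be a chordal claw-free graph that admits a clique tree. Then every max clique A of G is spanned by a triple of vertices: there exist vertices u, v, w ∈ A such that A is the only max clique of G containing all of u, v, and w. -/

import Mathlib

open SimpleGraph

/-- A graph is *chordal* if every cycle of length at least 4 has a chord, i.e. an
edge of the graph joining two vertices of the cycle that is not an edge of the cycle. -/
def IsChordal {V : Type*} (G : SimpleGraph V) : Prop :=
  ∀ (v : V) (c : G.Walk v v), c.IsCycle → 4 ≤ c.length →
    ∃ u w : V, u ∈ c.support ∧ w ∈ c.support ∧ G.Adj u w ∧ s(u, w) ∉ c.edges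

/-- A graph is *claw-free* if it has no induced subgraph isomorphic to the
complete bipartite graph `K_{1,3}`. -/
def ClawFree {V : Type*} (G : SimpleGraph V) : Prop :=
  IsEmpty (completeBipartiteGraph (Fin 1) (Fin 3) ↪g G)

/-- A *max clique* of `G` is a maximal clique. -/
def IsMaximalClique {V : Type*} (G : SimpleGraph V) (s : Set V) : Prop :=
  G.IsClique s ∧ ∀ t : Set V, G.IsClique t → s ⊆ t → s = t

/-- The type of max cliques of `G`. -/
abbrev MaxClique {V : Type*} (G : SimpleGraph V) : Type _ :=
  {s : Set V // IsMaximalClique G s}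

/-- `M_v`: the set of max cliques of `G` containing the vertex `v`. -/
def cliquesOf {V : Type*} (G : SimpleGraph V) (v : V) : Set (MaxClique G) :=
  {A | v ∈ A.1}

/-- A *clique tree* of `G`: a tree whose vertices are the max cliques of `G` such
that for every vertex `v` of `G` the subgraph induced by `M_v` is connected. -/
structure IsCliqueTree {V : Type*} (G : SimpleGraph V)
    (T : SimpleGraph (MaxClique G)) : Prop where
  isTree : T.IsTree
  induced_connected : ∀ v : V, (T.induce (cliquesOf G v)).Connected

/-- The subgraph of `T` induced by `S` is a path in `T`: there is a path of `T`
whose vertices are exactly `S` and whose edges are exactly the edges of `T`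
between vertices of `S`. -/
def InducedPath {M : Type*} (T : SimpleGraph M) (S : Set M) : Prop :=
  ∃ (a b : M) (p : T.Walk a b), p.IsPath ∧ (∀ A, A ∈ p.support ↔ A ∈ S) ∧
    ∀ A B, A ∈ S → B ∈ S → (T.Adj A B ↔ s(A, B) ∈ p.edges)

/-- `B` is a *star clique*: every vertex of `B` is contained in at most one
neighbor of `B` in the clique tree `T`. -/
def IsStarClique {V : Type*} (G : SimpleGraph V) (T : SimpleGraph (MaxClique G))
    (B : MaxClique G) : Prop :=
  ∀ v ∈ B.1, ∀ A A' : MaxClique G, T.Adj B A → T.Adj B A' →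
    v ∈ A.1 → v ∈ A'.1 → A = A'

/-- `B` is a *fork clique*: `B` has degree 3 in the clique tree `T`, for every
vertex `v ∈ B` there are two distinct neighbors `A, A'` of `B` with
`M_v = {B, A, A'}`, and for all distinct neighbors `A, A'` of `B` there is a
vertex `v` with `M_v = {B, A, A'}`. -/
def IsForkClique {V : Type*} (G : SimpleGraph V) (T : SimpleGraph (MaxClique G))
    (B : MaxClique G) : Prop :=
  (T.neighborSet B).ncard = 3 ∧
  (∀ v ∈ B.1, ∃ A A' : MaxClique G, A ≠ A' ∧ T.Adj B A ∧ T.Adj B A' ∧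
      cliquesOf G v = {B, A, A'}) ∧
  ∀ A A' : MaxClique G, T.Adj B A → T.Adj B A' → A ≠ A' →
      ∃ v : V, cliquesOf G v = {B, A, A'}

/-- The paths `T[S₁]` and `T[S₂]` *fork in `A`*: there is a fork
`(A', A, {A_P, A_Q})`, i.e. `A', A, A_P` are consecutive vertices of the path
`T[S₁]`, `A', A, A_Q` are consecutive vertices of the path `T[S₂]`,
`A_P` does not occur in `T[S₂]` and `A_Q` does not occur in `T[S₁]`. -/
def ForkAt {M : Type*} (T : SimpleGraph M) (S₁ S₂ : Set M) (A : M) : Prop :=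
  ∃ A' AP AQ : M, A' ∈ S₁ ∧ A' ∈ S₂ ∧ A ∈ S₁ ∧ A ∈ S₂ ∧ AP ∈ S₁ ∧ AQ ∈ S₂ ∧
    T.Adj A' A ∧ T.Adj A AP ∧ T.Adj A AQ ∧ A' ≠ AP ∧ A' ≠ AQ ∧ AP ∉ S₂ ∧ AQ ∉ S₁

/-- `A₁, A₂, A₃` form a *fork triangle* around `B`. -/
def FormsForkTriangle {V : Type*} (G : SimpleGraph V) (T : SimpleGraph (MaxClique G))
    (A₁ A₂ A₃ B : MaxClique G) : Prop :=
  A₁ ≠ A₂ ∧ A₁ ≠ A₃ ∧ A₂ ≠ A₃ ∧ T.Adj B A₁ ∧ T.Adj B A₂ ∧ T.Adj B A₃ ∧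
  (∃ u : V, cliquesOf G u = {A₁, B, A₂}) ∧
  (∃ v : V, cliquesOf G v = {A₂, B, A₃}) ∧
  (∃ w : V, cliquesOf G w = {A₃, B, A₁})

/-- `B` has a fork triangle. -/
def HasForkTriangle {V : Type*} (G : SimpleGraph V) (T : SimpleGraph (MaxClique G))
    (B : MaxClique G) : Prop :=
  ∃ A₁ A₂ A₃ : MaxClique G, FormsForkTriangle G T A₁ A₂ A₃ B

/-- In the tree `T` rooted at `R`, `B` is an ancestor of `A` (equivalently, `A` is
a descendant of `B`): `B` lies on the unique path from `R` to `A`.  Every vertex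
is an ancestor/descendant of itself. -/
def IsAncestor {M : Type*} (T : SimpleGraph M) (R A B : M) : Prop :=
  ∀ p : T.Walk R A, p.IsPath → B ∈ p.support

/-- In the tree `T` rooted at `R`, `A` is a child of `P`. -/
def IsChildOf {M : Type*} (T : SimpleGraph M) (R A P : M) : Prop :=
  T.Adj P A ∧ IsAncestor T R A P

/-- `R` is a leaf of `T`: it has exactly one neighbor. -/
def IsLeaf {M : Type*} (T : SimpleGraph M) (R : M) : Prop :=
  (T.neighborSet R).ncard = 1

/-- The triple `(v₁, v₂, v₃)` *spans* the max clique `A`: `A` is the only max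
clique of `G` containing `v₁`, `v₂` and `v₃`. -/
def Spans {V : Type*} (G : SimpleGraph V) (v₁ v₂ v₃ : V) (A : Set V) : Prop :=
  IsMaximalClique G A ∧ v₁ ∈ A ∧ v₂ ∈ A ∧ v₃ ∈ A ∧
    ∀ B : Set V, IsMaximalClique G B → v₁ ∈ B → v₂ ∈ B → v₃ ∈ B → B = A


section AuxLemmas

lemma exists_maxClique_supset {V : Type*} {G : SimpleGraph V} {s : Set V} (hs : G.IsClique s) :
    ∃ t : Set V, IsMaximalClique G t ∧ s ⊆ t := by
  have key : ∀ c ⊆ {t : Set V | G.IsClique t}, IsChain (· ⊆ ·) c → c.Nonempty →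
      ∃ ub ∈ {t : Set V | G.IsClique t}, ∀ s ∈ c, s ⊆ ub := by
    intro c hc hchain _
    refine ⟨⋃₀ c, ?_, fun a ha => Set.subset_sUnion_of_mem ha⟩
    rintro x ⟨a, hac, hxa⟩ y ⟨b, hbc, hyb⟩ hxy
    rcases hchain.total hac hbc with h | h
    · exact hc hbc (h hxa) hyb hxy
    · exact hc hac hxa (h hyb) hxy
  obtain ⟨m, hsm, hm⟩ := zorn_subset_nonempty {t : Set V | G.IsClique t} key s hs
  exact ⟨m, ⟨hm.1, fun t ht hmt => (hm.2 ht hmt).antisymm' hmt⟩, hsm⟩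

lemma tree_path_support_subset {M : Type*} {T : SimpleGraph M} (hT : T.IsTree)
    {x y : M} (p q : T.Walk x y) (hp : p.IsPath) : ∀ z ∈ p.support, z ∈ q.support := by
  classical
  have : p = (q.toPath : T.Walk x y) := (hT.existsUnique_path x y).unique hp q.toPath.2
  intro z hz
  exact q.support_toPath_subset (this ▸ hz)

lemma walk_in_set {M : Type*} {T : SimpleGraph M} {S : Set M}
    (hS : (T.induce S).Connected) {x y : M} (hx : x ∈ S) (hy : y ∈ S) :
    ∃ q : T.Walk x y, ∀ z ∈ q.support, z ∈ S := by
  obtain ⟨w⟩ := hS.preconnected ⟨x, hx⟩ ⟨y, hy⟩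
  refine ⟨w.map (SimpleGraph.Embedding.induce S).toHom, ?_⟩
  intro z hz
  replace hz : z ∈ (w.map (SimpleGraph.Embedding.induce S).toHom).support := hz
  rw [SimpleGraph.Walk.support_map] at hz
  obtain ⟨⟨z', hz'⟩, _, rfl⟩ := List.mem_map.1 hz
  exact hz'

lemma clawfree_aux {V : Type*} {G : SimpleGraph V} (hcf : ClawFree G) {a b1 b2 b3 : V}
    (hab1 : G.Adj a b1) (hab2 : G.Adj a b2) (hab3 : G.Adj a b3)
    (hd12 : b1 ≠ b2) (hd13 : b1 ≠ b3) (hd23 : b2 ≠ b3)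
    (hn12 : ¬ G.Adj b1 b2) (hn13 : ¬ G.Adj b1 b3) (hn23 : ¬ G.Adj b2 b3) : False := by
  have hane1 : a ≠ b1 := hab1.ne
  have hane2 : a ≠ b2 := hab2.ne
  have hane3 : a ≠ b3 := hab3.ne
  have hane1' : b1 ≠ a := hane1.symm
  have hane2' : b2 ≠ a := hane2.symm
  have hane3' : b3 ≠ a := hane3.symm
  have hn21 : ¬ G.Adj b2 b1 := fun h => hn12 h.symm
  have hn31 : ¬ G.Adj b3 b1 := fun h => hn13 h.symm
  have hn32 : ¬ G.Adj b3 b2 := fun h => hn23 h.symm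
  refine hcf.false ⟨⟨Sum.elim (fun _ => a) ![b1, b2, b3], ?_⟩, ?_⟩
  · rintro (x | x) (y | y)
    · simp [Subsingleton.elim x y]
    · fin_cases y <;> simp_all
    · fin_cases x <;> simp_all
    · fin_cases x <;> fin_cases y <;> simp_all <;>
        first
          | rfl
          | (intro h; first
              | exact hd12 h | exact hd13 h | exact hd23 h
              | exact hd12 h.symm | exact hd13 h.symm | exact hd23 h.symm)
  · rintro (x | x) (y | y)
    · dsimp only [DFunLike.coe]; simp
    · dsimp only [DFunLike.coe]; fin_cases y <;> simp_all
    · dsimp only [DFunLike.coe]; fin_cases x <;> simp [hab1.symm, hab2.symm, hab3.symm]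
    · dsimp only [DFunLike.coe]; fin_cases x <;> fin_cases y <;>
        simp_all [fun h => hn12 (G.adj_symm h), fun h => hn13 (G.adj_symm h),
          fun h => hn23 (G.adj_symm h)]

end AuxLemmas

/-- Let `G` be a chordal claw-free graph that admits a clique
tree.  Then every max clique `A` of `G` is spanned by a triple of vertices:
there exist `u, v, w ∈ A` such that `A` is the only max clique of `G`
containing all of `u`, `v` and `w`. -/
theorem maxClique_spanned_by_triple {V : Type*} [Fintype V] [Nonempty V]
    (G : SimpleGraph V) (hch : IsChordal G) (hcf : ClawFree G)
    (hT : ∃ T : SimpleGraph (MaxClique G), IsCliqueTree G T)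
    (A : Set V) (hA : IsMaximalClique G A) :
    ∃ u v w : V, u ∈ A ∧ v ∈ A ∧ w ∈ A ∧
      ∀ B : Set V, IsMaximalClique G B → u ∈ B → v ∈ B → w ∈ B → B = A := by
  classical
  obtain ⟨T, hCT⟩ := hT
  set Ahat : MaxClique G := ⟨A, hA⟩ with hAhat
  have hAne : A.Nonempty := by
    by_contra h
    rw [Set.not_nonempty_iff_eq_empty] at h
    have x := Classical.arbitrary V
    have h2 := hA.2 {x} (G.isClique_singleton x) (by simp [h])
    rw [h] at h2
    exact (Set.singleton_nonempty x).ne_empty h2.symm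
  have hdiff : ∀ B : MaxClique G, T.Adj Ahat B → ∃ x ∈ A, x ∉ B.1 := by
    intro B hadj
    by_contra h
    push_neg at h
    exact hadj.ne (Subtype.ext (hA.2 B.1 B.2.1 h))
  have hdiff2 : ∀ B : MaxClique G, T.Adj Ahat B → ∃ b ∈ B.1, b ∉ A := by
    intro B hadj
    by_contra h
    push_neg at h
    exact hadj.ne' (Subtype.ext (B.2.2 A hA.1 h))
  have hsep : ∀ (B B' : MaxClique G), T.Adj Ahat B → T.Adj Ahat B' → B ≠ B' →
      ∀ (q : T.Walk B B'), Ahat ∈ q.support := by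
    intro B B' h h' hne q
    have hp : (Walk.cons h.symm (Walk.cons h' Walk.nil) : T.Walk B B').IsPath := by
      rw [Walk.isPath_def]
      simp [h.ne, h.ne', h'.ne, h'.ne', hne]
    exact tree_path_support_subset hCT.isTree _ q hp Ahat (by simp)
  have hnotin : ∀ (B B' : MaxClique G), T.Adj Ahat B → T.Adj Ahat B' → B ≠ B' →
      ∀ b : V, b ∈ B.1 → b ∈ B'.1 → b ∈ A := by
    intro B B' h h' hne b hb hb'
    obtain ⟨q, hq⟩ := walk_in_set (hCT.induced_connected b)
      (show B ∈ cliquesOf G b from hb) (show B' ∈ cliquesOf G b from hb')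
    exact hq Ahat (hsep B B' h h' hne q)
  have hnadj : ∀ (B B' : MaxClique G), T.Adj Ahat B → T.Adj Ahat B' → B ≠ B' →
      ∀ b b' : V, b ∈ B.1 → b' ∈ B'.1 → b ∉ A → b' ∉ A → ¬ G.Adj b b' := by
    intro B B' h h' hne b b' hb hb' hbA hbA' hadj
    obtain ⟨C, hC, hsub⟩ := exists_maxClique_supset (G := G) (s := {b, b'})
      (SimpleGraph.isClique_pair.mpr (fun _ => hadj))
    have hbC : b ∈ C := hsub (by simp)
    have hbC' : b' ∈ C := hsub (by simp)
    obtain ⟨q1, hq1⟩ := walk_in_set (hCT.induced_connected b)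
      (show B ∈ cliquesOf G b from hb)
      (show (⟨C, hC⟩ : MaxClique G) ∈ cliquesOf G b from hbC)
    obtain ⟨q2, hq2⟩ := walk_in_set (hCT.induced_connected b')
      (show (⟨C, hC⟩ : MaxClique G) ∈ cliquesOf G b' from hbC')
      (show B' ∈ cliquesOf G b' from hb')
    have hmem := hsep B B' h h' hne (q1.append q2)
    rw [Walk.mem_support_append_iff] at hmem
    rcases hmem with hh | hh
    · exact hbA (hq1 Ahat hh)
    · exact hbA' (hq2 Ahat hh)
  have hkey : ∀ a ∈ A, ∀ B1 B2 B3 : MaxClique G, T.Adj Ahat B1 → T.Adj Ahat B2 →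
      T.Adj Ahat B3 → a ∈ B1.1 → a ∈ B2.1 → a ∈ B3.1 → B1 = B2 ∨ B1 = B3 ∨ B2 = B3 := by
    intro a ha B1 B2 B3 h1 h2 h3 m1 m2 m3
    by_contra hcon
    push_neg at hcon
    obtain ⟨n12, n13, n23⟩ := hcon
    obtain ⟨b1, hb1, hb1A⟩ := hdiff2 B1 h1
    obtain ⟨b2, hb2, hb2A⟩ := hdiff2 B2 h2
    obtain ⟨b3, hb3, hb3A⟩ := hdiff2 B3 h3
    have hd12 : b1 ≠ b2 := fun h => hb1A (hnotin B1 B2 h1 h2 n12 b1 hb1 (h ▸ hb2))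
    have hd13 : b1 ≠ b3 := fun h => hb1A (hnotin B1 B3 h1 h3 n13 b1 hb1 (h ▸ hb3))
    have hd23 : b2 ≠ b3 := fun h => hb2A (hnotin B2 B3 h2 h3 n23 b2 hb2 (h ▸ hb3))
    have hn12 : ¬ G.Adj b1 b2 := hnadj B1 B2 h1 h2 n12 b1 b2 hb1 hb2 hb1A hb2A
    have hn13 : ¬ G.Adj b1 b3 := hnadj B1 B3 h1 h3 n13 b1 b3 hb1 hb3 hb1A hb3A
    have hn23 : ¬ G.Adj b2 b3 := hnadj B2 B3 h2 h3 n23 b2 b3 hb2 hb3 hb2A hb3A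
    have hab1 : G.Adj a b1 := B1.2.1 m1 hb1 (fun h => hb1A (h ▸ ha))
    have hab2 : G.Adj a b2 := B2.2.1 m2 hb2 (fun h => hb2A (h ▸ ha))
    have hab3 : G.Adj a b3 := B3.2.1 m3 hb3 (fun h => hb3A (h ▸ ha))
    exact clawfree_aux hcf hab1 hab2 hab3 hd12 hd13 hd23 hn12 hn13 hn23
  obtain ⟨u, hu⟩ := hAne
  have choose_vw : ∃ v ∈ A, ∃ w ∈ A, ∀ B : MaxClique G, T.Adj Ahat B →
      ¬(u ∈ B.1 ∧ v ∈ B.1 ∧ w ∈ B.1) := by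
    by_cases h1 : ∃ B1 : MaxClique G, T.Adj Ahat B1 ∧ u ∈ B1.1
    · obtain ⟨B1, hB1adj, hB1u⟩ := h1
      obtain ⟨v, hvA, hvB1⟩ := hdiff B1 hB1adj
      by_cases h2 : ∃ B2 : MaxClique G, (T.Adj Ahat B2 ∧ u ∈ B2.1) ∧ B2 ≠ B1
      · obtain ⟨B2, ⟨hB2adj, hB2u⟩, hB21⟩ := h2
        obtain ⟨w, hwA, hwB2⟩ := hdiff B2 hB2adj
        refine ⟨v, hvA, w, hwA, ?_⟩
        rintro B hBadj ⟨hBu, hBv, hBw⟩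
        rcases hkey u hu B1 B2 B hB1adj hB2adj hBadj hB1u hB2u hBu with h | h | h
        · exact hB21 h.symm
        · exact hvB1 (h ▸ hBv)
        · exact hwB2 (h ▸ hBw)
      · push_neg at h2
        refine ⟨v, hvA, v, hvA, ?_⟩
        rintro B hBadj ⟨hBu, hBv, -⟩
        exact hvB1 ((h2 B ⟨hBadj, hBu⟩) ▸ hBv)
    · push_neg at h1
      exact ⟨u, hu, u, hu, fun B hBadj h => h1 B hBadj h.1⟩
  obtain ⟨v, hv, w, hw, hsel⟩ := choose_vw
  refine ⟨u, v, w, hu, hv, hw, ?_⟩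
  intro B hBmax hBu hBv hBw
  by_contra hne
  have hAB : Ahat ≠ (⟨B, hBmax⟩ : MaxClique G) := by
    intro h
    exact hne (congrArg Subtype.val h).symm
  obtain ⟨q0⟩ := hCT.isTree.isConnected.preconnected Ahat ⟨B, hBmax⟩
  obtain ⟨p, hp⟩ := q0.toPath
  obtain ⟨D, h, q, rfl⟩ := Walk.exists_eq_cons_of_ne hAB p
  have hDmem : D ∈ (Walk.cons h q).support := by
      rw [Walk.support_cons]
      exact List.mem_cons_of_mem _ q.start_mem_support
  have hin : ∀ x : V, x ∈ A → x ∈ B → x ∈ D.1 := by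
    intro x hxA hxB
    obtain ⟨q', hq'⟩ := walk_in_set (hCT.induced_connected x)
      (show Ahat ∈ cliquesOf G x from hxA)
      (show (⟨B, hBmax⟩ : MaxClique G) ∈ cliquesOf G x from hxB)
    exact hq' D (tree_path_support_subset hCT.isTree (Walk.cons h q) q' hp D hDmem)
  exact hsel D h ⟨hin u hu hBu, hin v hv hBv, hin w hw hBw⟩
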